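/- Suppose smooth real functions h(u,w), U(u), U₁(u) satisfy the Riccati equation h_u = U e^h + U₁ e^{-h} and the harmonic equation h_{uu} + h_{ww} = 0. Then there exists a function U₂(u), depending only on u, such that h_w² = -U₁² e^{-2h} + 2U₁' e^{-h} - U₂ - 2U' e^h - U² e^{2h}. -/

import Mathlib

/-- If `h(u,w)` satisfies the Riccati equation `h_u = U e^h + U₁ e^{-h}` and the
harmonic equation `h_{uu} + h_{ww} = 0`, then there is a function `U₂(u)` of `u`
alone with `h_w² = -U₁² e^{-2h} + 2U₁' e^{-h} - U₂ - 2U' e^h - U² e^{2h}`. -/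
theorem stmt11 (h hu hw huu hww : ℝ → ℝ → ℝ) (U U₁ U' U₁' : ℝ → ℝ)
    (hhu : ∀ u w, HasDerivAt (fun x => h x w) (hu u w) u)
    (hhw : ∀ u w, HasDerivAt (fun y => h u y) (hw u w) w)
    (hhuu : ∀ u w, HasDerivAt (fun x => hu x w) (huu u w) u)
    (hhww : ∀ u w, HasDerivAt (fun y => hw u y) (hww u w) w)
    (hU : ∀ u, HasDerivAt U (U' u) u)
    (hU₁ : ∀ u, HasDerivAt U₁ (U₁' u) u)
    (hric : ∀ u w, hu u w = U u * Real.exp (h u w) + U₁ u * Real.exp (-(h u w)))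
    (hharm : ∀ u w, huu u w + hww u w = 0) :
    ∃ U₂ : ℝ → ℝ, ∀ u w,
      (hw u w) ^ 2 =
        -(U₁ u) ^ 2 * Real.exp (-(2 * h u w)) + 2 * U₁' u * Real.exp (-(h u w))
          - U₂ u - 2 * U' u * Real.exp (h u w) - (U u) ^ 2 * Real.exp (2 * h u w) := by
  -- First compute huu from the Riccati equation.
  have key : ∀ u w, huu u w = U' u * Real.exp (h u w) + U u * hu u w * Real.exp (h u w)
      + U₁' u * Real.exp (-(h u w)) - U₁ u * hu u w * Real.exp (-(h u w)) := by
    intro u w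
    have d1 : HasDerivAt (fun x => U x * Real.exp (h x w) + U₁ x * Real.exp (-(h x w)))
        (U' u * Real.exp (h u w) + U u * (Real.exp (h u w) * hu u w)
          + (U₁' u * Real.exp (-(h u w)) + U₁ u * (Real.exp (-(h u w)) * -(hu u w)))) u := by
      exact ((hU u).mul ((hhu u w).exp)).add ((hU₁ u).mul (((hhu u w).neg).exp))
    have d2 : HasDerivAt (fun x => hu x w)
        (U' u * Real.exp (h u w) + U u * (Real.exp (h u w) * hu u w)
          + (U₁' u * Real.exp (-(h u w)) + U₁ u * (Real.exp (-(h u w)) * -(hu u w)))) u := by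
      apply d1.congr_of_eventuallyEq
      filter_upwards with x using hric x w
    have := (hhuu u w).unique d2
    rw [this]; ring
  -- The function F(w) below has zero w-derivative.
  set F : ℝ → ℝ → ℝ := fun u w => hw u w ^ 2 + U₁ u ^ 2 * Real.exp (-(2 * h u w))
      - 2 * U₁' u * Real.exp (-(h u w)) + 2 * U' u * Real.exp (h u w)
      + U u ^ 2 * Real.exp (2 * h u w) with hF
  have hconst : ∀ u w, F u w = F u 0 := by
    intro u w
    have hderiv : ∀ y, HasDerivAt (fun y => F u y) 0 y := by
      intro y
      have d : HasDerivAt (fun y => F u y)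
          (2 * hw u y * hww u y + U₁ u ^ 2 * (Real.exp (-(2 * h u y)) * -(2 * hw u y))
            - 2 * U₁' u * (Real.exp (-(h u y)) * -(hw u y))
            + 2 * U' u * (Real.exp (h u y) * hw u y)
            + U u ^ 2 * (Real.exp (2 * h u y) * (2 * hw u y))) y := by
        have e1 : HasDerivAt (fun y => hw u y ^ 2) (2 * hw u y * hww u y) y := by
          have := (hhww u y).fun_pow 2
          simpa [mul_comm, mul_assoc, mul_left_comm] using this
        have e2 := (((hhw u y).const_mul (2:ℝ)).neg).exp.const_mul (U₁ u ^ 2)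
        have e3 := ((hhw u y).neg).exp.const_mul (2 * U₁' u)
        have e4 := (hhw u y).exp.const_mul (2 * U' u)
        have e5 := ((hhw u y).const_mul (2:ℝ)).exp.const_mul (U u ^ 2)
        have := (((e1.add e2).sub e3).add e4).add e5
        exact this
      convert d using 1
      have hww_eq : hww u y = -huu u y := by linarith [hharm u y]
      rw [hww_eq, key u y, hric u y]
      have h1 : Real.exp (h u y) * Real.exp (-(h u y)) = 1 := by
        rw [← Real.exp_add]; simp
      have h2 : Real.exp (2 * h u y) = Real.exp (h u y) * Real.exp (h u y) := by
        rw [← Real.exp_add]; ring_nf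
      have h3 : Real.exp (-(2 * h u y)) = Real.exp (-(h u y)) * Real.exp (-(h u y)) := by
        rw [← Real.exp_add]; ring_nf
      rw [h2, h3]
      nlinarith [h1, Real.exp_pos (h u y)]
    have : (fun y => F u y) w = (fun y => F u y) 0 :=
      is_const_of_deriv_eq_zero (fun y => (hderiv y).differentiableAt)
        (fun y => (hderiv y).deriv) w 0
    simpa using this
  refine ⟨fun u => -(hw u 0 ^ 2 + U₁ u ^ 2 * Real.exp (-(2 * h u 0))
      - 2 * U₁' u * Real.exp (-(h u 0)) + 2 * U' u * Real.exp (h u 0)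
      + U u ^ 2 * Real.exp (2 * h u 0)), fun u w => ?_⟩
  have := hconst u w
  simp only [hF] at this
  beta_reduce
  linarith [this]
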